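/- arXiv:1712.07746 — 3 statements merged into one kernel-verified Lean document; each statement's English description precedes it below -/
import Mathlib

section
/- Let F be a free group and let M be a finitely generated submonoid of F. If M is a Kleene monoid, i.e., every rational subset of M is recognizable, then M is graded. -/
universe u

def IsGraded (M : Type*) [Monoid M] : Prop :=
  ∃ (X : Type) (_ : Finite X) (α : FreeMonoid X →* M),
    Function.Surjective α ∧ ∀ m : M, (α ⁻¹' {m}).Finite

/-- A subset `R` of a monoid `N` is rational if it is the image of a regular
language under a monoid homomorphism from a finitely generated free monoid. -/
def IsRationalSubset {N : Type*} [Monoid N] (R : Set N) : Prop :=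
  ∃ (A : Type) (_ : Finite A) (φ : FreeMonoid A →* N) (L : Language A),
    L.IsRegular ∧ (fun w => φ (FreeMonoid.ofList w)) '' L = R

/-- A subset `R` of a monoid `N` is recognizable if it is the full preimage of its
image under a monoid homomorphism to a finite monoid. -/
def IsRecognizableSubset {N : Type*} [Monoid N] (R : Set N) : Prop :=
  ∃ (K : Type) (_ : Monoid K) (_ : Finite K) (θ : N →* K), R = θ ⁻¹' (θ '' R)

set_option linter.unusedSectionVars false

namespace MyTF


variable {β : Type*}

def RR : (β × Bool) → (β × Bool) → Prop := fun p q => ¬(p.1 = q.1 ∧ p.2 = !q.2)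

variable [DecidableEq β]

lemma chain'_reduce (L : List (β × Bool)) : List.Chain' RR (FreeGroup.reduce L) := by
  induction L with
  | nil => exact List.isChain_nil
  | cons x L ih =>
    rw [FreeGroup.reduce.cons]
    cases h : FreeGroup.reduce L with
    | nil => exact List.isChain_singleton _
    | cons hd tl =>
      rw [h] at ih
      dsimp only
      split_ifs with hc
      · exact ih.tail
      · exact List.isChain_cons_cons.mpr ⟨hc, ih⟩

lemma reduce_eq_self_of_chain' {L : List (β × Bool)} (h : List.Chain' RR L) :
    FreeGroup.reduce L = L := by
  induction L with
  | nil => rfl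
  | cons x L ih =>
    rw [FreeGroup.reduce.cons, ih h.tail]
    cases L with
    | nil => rfl
    | cons y t =>
      dsimp only
      rw [if_neg (List.isChain_cons_cons.mp h).1]

lemma chain'_toWord (x : FreeGroup β) : List.Chain' RR x.toWord := by
  rw [← FreeGroup.reduce_toWord]
  exact chain'_reduce _

lemma chain'_flatten_replicate {L : List (β × Bool)} (hL : L ≠ []) (h : List.Chain' RR L)
    (hc : ∀ p ∈ L.getLast?, ∀ q ∈ L.head?, RR p q) (n : ℕ) :
    List.Chain' RR (List.flatten (List.replicate n L)) := by
  cases n with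
  | zero => exact List.isChain_nil
  | succ n =>
    rw [List.Chain', List.isChain_flatten (fun hmem => hL (List.eq_of_mem_replicate hmem).symm)]
    refine ⟨fun l hl => (List.eq_of_mem_replicate hl) ▸ h, ?_⟩
    induction n with
    | zero => rw [List.replicate_one]; exact List.isChain_singleton L
    | succ k ihk =>
      rw [List.replicate_succ]
      refine ihk.cons ?_
      intro z hz
      have hz2 : z = L := by
        cases k with
        | zero => rw [List.replicate_one] at hz; simpa using hz.symm
        | succ m => rw [List.replicate_succ, List.head?_cons] at hz; simpa using hz.symm
      rw [hz2]
      exact hc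

lemma pow_aux : ∀ (N : ℕ) (x : FreeGroup β), x.norm ≤ N → ∀ n, n ≠ 0 → x ^ n = 1 → x = 1 := by
  intro N
  induction N with
  | zero => intro x hx _ _ _; rwa [Nat.le_zero, FreeGroup.norm_eq_zero] at hx
  | succ N ih =>
    intro x hx n hn hpow
    by_contra hx1
    have hL : x.toWord ≠ [] := fun h => hx1 (FreeGroup.toWord_eq_nil_iff.mp h)
    have hch : List.Chain' RR x.toWord := chain'_toWord x
    by_cases hcyc : ∀ p ∈ x.toWord.getLast?, ∀ q ∈ x.toWord.head?, RR p q
    · have h1 : x ^ n = FreeGroup.mk (List.flatten (List.replicate n x.toWord)) := by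
        conv_lhs => rw [← FreeGroup.mk_toWord (x := x)]
        rw [FreeGroup.pow_mk]
      have h2 := reduce_eq_self_of_chain' (chain'_flatten_replicate hL hch hcyc n)
      have h3 : List.flatten (List.replicate n x.toWord) = [] := by
        have h4 : FreeGroup.toWord (FreeGroup.mk (List.flatten (List.replicate n x.toWord))) = [] := by
          rw [← h1, hpow, FreeGroup.toWord_one]
        rwa [FreeGroup.toWord_mk, h2] at h4
      obtain ⟨m, rfl⟩ : ∃ m, n = m + 1 := Nat.exists_eq_succ_of_ne_zero hn
      rw [List.replicate_succ, List.flatten_cons] at h3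
      exact hL (List.append_eq_nil_iff.mp h3).1
    · push_neg at hcyc
      obtain ⟨p, hp, q, hq, hpq⟩ := hcyc
      simp only [RR, not_not] at hpq
      obtain ⟨a, t, hat⟩ := List.exists_cons_of_ne_nil hL
      have hq2 : q = a := by
        rw [hat] at hq; simpa using hq.symm
      rcases eq_or_ne t [] with ht | ht
      · rw [ht] at hat
        have hp2 : p = a := by
          rw [hat] at hp; simpa using hp.symm
        rw [hp2, hq2] at hpq
        simp at hpq
      · set b := t.getLast ht with hb
        have htdec : t = t.dropLast ++ [b] := (List.dropLast_append_getLast ht).symm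
        have hdecomp : x.toWord = q :: (t.dropLast ++ [p]) := by
          have hp2 : p = b := by
            rw [hat] at hp
            conv at hp => rw [htdec]
            rw [show (a :: (t.dropLast ++ [b])).getLast? = some b from by
              rw [← List.cons_append]; exact List.getLast?_concat] at hp
            simpa using hp.symm
          rw [hat, hq2, hp2]
          rw [← htdec]
        set Mid := t.dropLast with hMid
        have hpval : p = (q.1, !q.2) := Prod.ext hpq.1 hpq.2
        have hxeq : x = FreeGroup.mk x.toWord := (FreeGroup.mk_toWord).symm
        set g := FreeGroup.mk [q] with hg
        set y := FreeGroup.mk Mid with hy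
        have hconj : x = g * y * g⁻¹ := by
          rw [hg, hy, FreeGroup.inv_mk, FreeGroup.mul_mk, FreeGroup.mul_mk]
          conv_lhs => rw [hxeq, hdecomp]
          congr 1
          simp [FreeGroup.invRev, hpval]
        have hMidchain : List.Chain' RR Mid := List.IsChain.infix hch ⟨[q], [p], by rw [hdecomp]; simp⟩
        have hMidred : FreeGroup.reduce Mid = Mid := reduce_eq_self_of_chain' hMidchain
        have hytoWord : y.toWord = Mid := by rw [hy, FreeGroup.toWord_mk, hMidred]
        have hnormy : y.norm ≤ N := by
          have h1 : y.norm = Mid.length := by rw [FreeGroup.norm, hytoWord]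
          have h2 : x.norm = x.toWord.length := rfl
          have h3 : x.toWord.length = Mid.length + 2 := by
            rw [hdecomp]; simp
          omega
        have hyn : y ^ n = 1 := by
          have h5 : x ^ n = g * y ^ n * g⁻¹ := by rw [hconj, conj_pow]
          have h6 : g * y ^ n * g⁻¹ = 1 := by rw [← h5, hpow]
          calc y ^ n = g⁻¹ * (g * y ^ n * g⁻¹) * g := by group
          _ = 1 := by rw [h6]; group
        have hy1 : y = 1 := ih y hnormy n hn hyn
        rw [hy1, mul_one] at hconj
        rw [hconj] at hx1
        simp at hx1

lemma torsionfree {ι : Type*} (x : FreeGroup ι) (n : ℕ) (hn : n ≠ 0) (h : x ^ n = 1) :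
    x = 1 := by
  letI := Classical.decEq ι
  exact pow_aux x.norm x le_rfl n hn h



lemma isRegular_univ {A : Type} : Language.IsRegular (Set.univ : Language A) :=
  ⟨Unit, inferInstance, ⟨fun _ _ => (), (), Set.univ⟩, by
    ext w
    constructor
    · intro _; trivial
    · intro _; trivial⟩

section Singleton

variable {A : Type} [DecidableEq A]

private def sigSing (l₀ : List A) := Option {l : List A // l <:+ l₀}

private instance (l₀ : List A) : Finite (sigSing l₀) := by
  have h : {l : List A | l <:+ l₀}.Finite := by
    have := l₀.tails.finite_toSet
    convert this using 1
    ext l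
    simp [List.mem_tails]
  haveI : Finite {l : List A // l <:+ l₀} := h.to_subtype
  haveI : Fintype {l : List A // l <:+ l₀} := Fintype.ofFinite _
  unfold sigSing
  exact Finite.of_fintype _

private def dfaSing (l₀ : List A) : DFA A (sigSing l₀) where
  step := fun s a => s.bind (fun l =>
    match l with
    | ⟨[], _⟩ => none
    | ⟨b :: rest, h⟩ => if a = b then some ⟨rest, (List.suffix_cons b rest).trans h⟩ else none)
  start := some ⟨l₀, List.suffix_rfl⟩
  accept := {some ⟨[], List.nil_suffix⟩}

private lemma dfaSing_none (l₀ : List A) (w : List A) :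
    (dfaSing l₀).evalFrom none w = none := by
  induction w with
  | nil => rfl
  | cons a w ih => exact ih

private lemma dfaSing_eval (l₀ : List A) (w : List A) :
    ∀ (l : List A) (hl : l <:+ l₀),
      ((dfaSing l₀).evalFrom (some ⟨l, hl⟩) w ∈ (dfaSing l₀).accept ↔ w = l) := by
  induction w with
  | nil =>
    intro l hl
    simp only [DFA.evalFrom_nil, dfaSing, Set.mem_singleton_iff]
    constructor
    · intro h
      have h2 : (⟨l, hl⟩ : {l : List A // l <:+ l₀}) = ⟨[], List.nil_suffix⟩ :=
        Option.some_injective _ h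
      exact (congrArg Subtype.val h2).symm
    · rintro rfl
      rfl
  | cons a w ih =>
    intro l hl
    have hstep : (dfaSing l₀).evalFrom (some ⟨l, hl⟩) (a :: w) =
        (dfaSing l₀).evalFrom ((dfaSing l₀).step (some ⟨l, hl⟩) a) w := rfl
    rw [hstep]
    cases l with
    | nil =>
      have h1 : (dfaSing l₀).step (some ⟨[], hl⟩) a = none := rfl
      rw [h1, dfaSing_none]
      simp [dfaSing]
      exact fun h => Option.some_ne_none _ (Set.mem_singleton_iff.mp h).symm
    | cons b rest =>
      by_cases hab : a = b
      · subst hab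
        have h1 : (dfaSing l₀).step (some ⟨a :: rest, hl⟩) a =
            some ⟨rest, (List.suffix_cons a rest).trans hl⟩ := by
          simp [dfaSing]
          rfl
        rw [h1, ih]
        simp
      · have h1 : (dfaSing l₀).step (some ⟨b :: rest, hl⟩) a = none := by
          simp [dfaSing, hab]
          rfl
        rw [h1, dfaSing_none]
        simp [dfaSing, hab]
        exact fun h => Option.some_ne_none _ (Set.mem_singleton_iff.mp h).symm

private lemma dfaSing_accepts (l₀ : List A) : (dfaSing l₀).accepts = {l₀} := by
  ext w
  rw [DFA.mem_accepts]
  have := dfaSing_eval l₀ w l₀ List.suffix_rfl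
  rw [show (dfaSing l₀).eval w =
    (dfaSing l₀).evalFrom (some ⟨l₀, List.suffix_rfl⟩) w from rfl, this]
  exact ⟨fun h => h ▸ rfl, fun h => h⟩

lemma isRegular_singleton (l₀ : List A) : Language.IsRegular ({l₀} : Language A) :=
  ⟨sigSing l₀, Fintype.ofFinite _, dfaSing l₀, dfaSing_accepts l₀⟩

end Singleton


end MyTF

theorem graded_of_kleene_submonoid_of_freeGroup
    (F : Type u) [Group F] (hF : ∃ ι : Type u, Nonempty (F ≃* FreeGroup ι))
    (M : Submonoid F) (hM : M.FG)
    (hKleene : ∀ R : Set M, IsRationalSubset R → IsRecognizableSubset R) :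
    IsGraded M := by
  classical
  obtain ⟨s, hs⟩ := hM
  set l : List F := s.toList.filter (fun a => a ≠ 1) with hl
  have hmeml : ∀ a ∈ l, a ∈ M ∧ a ≠ 1 := by
    intro a ha
    rw [hl, List.mem_filter] at ha
    refine ⟨?_, by simpa using ha.2⟩
    rw [← hs]
    exact Submonoid.subset_closure (by simpa using (Finset.mem_toList).mp ha.1)
  set X := Fin l.length with hX
  have hgen : ∀ i : X, l.get i ∈ M := fun i => (hmeml _ (List.get_mem l i)).1
  set α : FreeMonoid X →* M := FreeMonoid.lift (fun i => (⟨l.get i, hgen i⟩ : M)) with hα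
  -- units of M are trivial
  have hunit : ∀ u v : F, u ∈ M → v ∈ M → u * v = 1 → u = 1 := by
    intro u v hu hv huv
    set u' : M := ⟨u, hu⟩ with hu'
    set v' : M := ⟨v, hv⟩ with hv'
    have h1 : u' * v' = 1 := Subtype.ext huv
    have hvu : v * u = 1 := by
      have h0 : v = u⁻¹ := eq_inv_of_mul_eq_one_right huv
      rw [h0, inv_mul_cancel]
    have h2 : v' * u' = 1 := Subtype.ext hvu
    have hkey : ∀ w : List Unit,
        FreeMonoid.lift (fun _ : Unit => u') (FreeMonoid.ofList w) = u' ^ w.length := by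
      intro w
      rw [FreeMonoid.lift_ofList, List.map_const', List.prod_replicate]
    have hrat : IsRationalSubset (Set.range fun n : ℕ => u' ^ n) := by
      refine ⟨Unit, inferInstance, FreeMonoid.lift (fun _ => u'), Set.univ,
        MyTF.isRegular_univ, ?_⟩
      rw [Set.image_univ]
      ext x
      constructor
      · rintro ⟨w, rfl⟩; exact ⟨w.length, (hkey w).symm⟩
      · rintro ⟨n, rfl⟩; exact ⟨List.replicate n (), by dsimp only; rw [hkey]; simp⟩
    obtain ⟨K, _, _, θ, hθ⟩ := hKleene _ hrat
    have hνu : IsUnit (θ u') :=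
      ⟨⟨θ u', θ v', by rw [← map_mul, h1, map_one], by rw [← map_mul, h2, map_one]⟩, rfl⟩
    set d := orderOf hνu.unit with hd
    have hdpos : 0 < d := orderOf_pos _
    have hθud : (θ u') ^ d = 1 := by
      have h3 := congrArg (Units.val) (pow_orderOf_eq_one hνu.unit)
      rw [Units.val_pow_eq_pow_val, hνu.unit_spec, Units.val_one] at h3
      exact h3
    have h3 : θ v' * θ u' = 1 := by rw [← map_mul, h2, map_one]
    have hθv : θ v' = (θ u') ^ (d - 1) := by
      calc θ v' = θ v' * (θ u') ^ d := by rw [hθud, mul_one]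
      _ = (θ v' * θ u') * (θ u') ^ (d - 1) := by
          rw [mul_assoc, ← pow_succ']
          congr 2
          omega
      _ = (θ u') ^ (d - 1) := by rw [h3, one_mul]
    have hv'R : v' ∈ Set.range fun n : ℕ => u' ^ n := by
      rw [hθ]
      exact ⟨u' ^ (d - 1), ⟨d - 1, rfl⟩, by rw [map_pow]; exact hθv.symm⟩
    obtain ⟨n, hn⟩ := hv'R
    have hn' : u' ^ n = v' := hn
    have hpow : u' ^ (n + 1) = 1 := by rw [pow_succ', hn', h1]
    have hFu : u ^ (n + 1) = 1 := by
      have h4 := congrArg (Subtype.val) hpow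
      simpa using h4
    obtain ⟨ι, ⟨e⟩⟩ := hF
    have he : e u ^ (n + 1) = 1 := by rw [← map_pow, hFu, map_one]
    have h5 := MyTF.torsionfree _ _ (Nat.succ_ne_zero n) he
    apply e.injective
    rw [h5, map_one]
  -- surjectivity
  have hsurj : Function.Surjective α := by
    intro m
    have hm : (m : F) ∈ Submonoid.closure (↑s : Set F) := by rw [hs]; exact m.2
    have key : ∃ w : FreeMonoid X, ((α w : M) : F) = (m : F) := by
      refine Submonoid.closure_induction
        (motive := fun a _ => ∃ w : FreeMonoid X, ((α w : M) : F) = a) ?_ ?_ ?_ hm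
      · intro a ha
        by_cases h1 : a = 1
        · exact ⟨1, by rw [map_one, h1]; rfl⟩
        · have hal : a ∈ l := by
            rw [hl, List.mem_filter]
            exact ⟨Finset.mem_toList.mpr ha, by simpa using h1⟩
          obtain ⟨i, hi⟩ := List.mem_iff_get.mp hal
          exact ⟨FreeMonoid.of i, by rw [hα, FreeMonoid.lift_eval_of]; exact hi⟩
      · exact ⟨1, by rw [map_one]; rfl⟩
      · intro a b ha hb iha ihb
        obtain ⟨w1, hw1⟩ := iha
        obtain ⟨w2, hw2⟩ := ihb
        exact ⟨w1 * w2, by rw [map_mul, Submonoid.coe_mul, hw1, hw2]⟩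
    obtain ⟨w, hw⟩ := key
    exact ⟨w, Subtype.ext hw⟩
  refine ⟨X, inferInstance, α, hsurj, ?_⟩
  intro m
  by_contra hfin
  obtain ⟨w₀, hw₀⟩ := hsurj m
  have hrat : IsRationalSubset ({m} : Set M) := by
    refine ⟨X, inferInstance, α, {FreeMonoid.toList w₀}, MyTF.isRegular_singleton _, ?_⟩
    change (fun w => α (FreeMonoid.ofList w)) '' ({FreeMonoid.toList w₀} : Set (List X)) = {m}
    rw [Set.image_singleton, FreeMonoid.ofList_toList, hw₀]
  obtain ⟨K, _, _, θ, hθ⟩ := hKleene _ hrat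
  haveI : Nonempty K := ⟨1⟩
  haveI : Fintype K := Fintype.ofFinite K
  have hlong : ∃ w : FreeMonoid X, α w = m ∧
      Fintype.card K < (FreeMonoid.toList w).length := by
    by_contra h
    push_neg at h
    apply hfin
    have hsub : α ⁻¹' {m} ⊆
        FreeMonoid.toList ⁻¹' {t : List X | t.length ≤ Fintype.card K} := by
      intro w hw
      exact h w hw
    exact ((List.finite_length_le X (Fintype.card K)).preimage
      (FreeMonoid.toList.injective.injOn)).subset hsub
  obtain ⟨w, hwm, hwlen⟩ := hlong
  set t := FreeMonoid.toList w with ht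
  -- the key pumping argument
  have key : ∀ (i j : ℕ), i < j → j ≤ t.length →
      θ (α (FreeMonoid.ofList (t.take i))) = θ (α (FreeMonoid.ofList (t.take j))) → False := by
    intro i j hij hjle hfeq
    set p := t.take i with hp
    set q := t.drop j with hq
    set sm := (t.take j).drop i with hsm
    have hps : t.take j = p ++ sm := by
      conv_lhs => rw [← List.take_append_drop i (t.take j)]
      rw [← hsm, List.take_take, min_eq_left hij.le, ← hp]
    have hsmlen : sm.length = j - i := by
      rw [hsm, List.length_drop, List.length_take, min_eq_left hjle]
    have hsmne : sm ≠ [] := by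
      intro h0
      rw [h0] at hsmlen
      simp at hsmlen
      omega
    set P := α (FreeMonoid.ofList p) with hP
    set S := α (FreeMonoid.ofList sm) with hS
    set Q := α (FreeMonoid.ofList q) with hQ
    have hm2 : P * S * Q = m := by
      have h0 : t = (p ++ sm) ++ q := by rw [← hps, hq, List.take_append_drop]
      have h4 : FreeMonoid.ofList t =
          FreeMonoid.ofList p * FreeMonoid.ofList sm * FreeMonoid.ofList q := by
        rw [h0, FreeMonoid.ofList_append, FreeMonoid.ofList_append]
      have h5 : α (FreeMonoid.ofList t) = m := by
        rw [ht, FreeMonoid.ofList_toList]; exact hwm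
      rw [h4, map_mul, map_mul] at h5
      exact h5
    have h6 : α (FreeMonoid.ofList (t.take j)) = P * S := by
      rw [hps, FreeMonoid.ofList_append, map_mul]
    have hθPS : θ (P * S) = θ P := by
      rw [← h6]
      exact hfeq.symm
    have hPQ : P * Q = m := by
      have h7 : θ (P * Q) = θ m := by
        calc θ (P * Q) = θ P * θ Q := map_mul _ _ _
        _ = θ (P * S) * θ Q := by rw [hθPS]
        _ = θ (P * S * Q) := (map_mul θ (P * S) Q).symm
        _ = θ m := by rw [hm2]
      have h8 : P * Q ∈ θ ⁻¹' (θ '' {m}) := by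
        rw [Set.image_singleton]
        exact h7
      rw [← hθ] at h8
      exact h8
    have hS1 : (S : F) = 1 := by
      have h9 := congrArg Subtype.val (hm2.trans hPQ.symm)
      simp only [Submonoid.coe_mul] at h9
      have h10 : (P : F) * (S : F) = (P : F) * 1 := by
        rw [mul_one]
        exact mul_right_cancel h9
      exact mul_left_cancel h10
    obtain ⟨x, s', hx⟩ := List.exists_cons_of_ne_nil hsmne
    have hSsplit : S = α (FreeMonoid.of x) * α (FreeMonoid.ofList s') := by
      rw [hS, show FreeMonoid.ofList sm = FreeMonoid.of x * FreeMonoid.ofList s' from by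
        rw [hx, FreeMonoid.ofList_cons], map_mul]
    have hSval : (↑(α (FreeMonoid.of x)) : F) * (↑(α (FreeMonoid.ofList s')) : F) = 1 := by
      rw [hSsplit] at hS1
      simp only [Submonoid.coe_mul] at hS1
      exact hS1
    have hxget : (↑(α (FreeMonoid.of x)) : F) = l.get x := by
      rw [hα, FreeMonoid.lift_eval_of]
    have hone := hunit (l.get x) _ (hgen x) (α (FreeMonoid.ofList s')).2
      (by rw [← hxget]; exact hSval)
    exact (hmeml _ (List.get_mem l x)).2 hone
  have hcard : Fintype.card K < Fintype.card (Fin (t.length + 1)) := by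
    rw [Fintype.card_fin]
    omega
  obtain ⟨i, j, hij, hfij⟩ := Fintype.exists_ne_map_eq_of_card_lt
    (fun j : Fin (t.length + 1) => θ (α (FreeMonoid.ofList (t.take j)))) hcard
  rcases Ne.lt_or_gt hij with h | h
  · exact key i j h (Nat.lt_succ_iff.mp j.isLt) hfij
  · exact key j i h (Nat.lt_succ_iff.mp i.isLt) hfij.symm
end

section
/- Let F be the free group on two generators a and b, and let M be the submonoid of F generated by the three elements a, b, and a⁻¹b⁻¹ab. Then M is graded. -/
namespace CommutatorGradedAux

abbrev Mat := Matrix (Fin 3) (Fin 3) ℤ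

def Xu : Matˣ := ⟨!![1,1,0;0,1,0;0,0,1], !![1,-1,0;0,1,0;0,0,1], by decide, by decide⟩
def Yu : Matˣ := ⟨!![1,0,0;0,1,1;0,0,1], !![1,0,0;0,1,-1;0,0,1], by decide, by decide⟩
def Zu : Matˣ := ⟨!![1,0,1;0,1,0;0,0,1], !![1,0,-1;0,1,0;0,0,1], by decide, by decide⟩

def ψ : FreeGroup (Fin 2) →* Matˣ := FreeGroup.lift ![Xu, Yu]

def f : Fin 3 → Mat := ![Xu.val, Yu.val, Zu.val]

/-- The invariant: unitriangular with nonnegative upper entries. -/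
def P (A : Mat) : Prop :=
  A 0 0 = 1 ∧ A 1 1 = 1 ∧ A 2 2 = 1 ∧ A 1 0 = 0 ∧ A 2 0 = 0 ∧ A 2 1 = 0 ∧
    0 ≤ A 0 1 ∧ 0 ≤ A 1 2 ∧ 0 ≤ A 0 2

def s (A : Mat) : ℤ := A 0 1 + A 1 2 + A 0 2

lemma growth : ∀ l : List (Fin 3),
    P ((l.map f).prod) ∧ (l.length : ℤ) ≤ s ((l.map f).prod) := by
  intro l
  induction l with
  | nil => simp [P, s, Matrix.one_apply]
  | cons i t ih =>
    obtain ⟨⟨h00, h11, h22, h10, h20, h21, n01, n12, n02⟩, hlen⟩ := ih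
    simp only [s] at hlen
    set A := ((t.map f).prod) with hA
    have h : (((i :: t).map f).prod) = f i * A := by simp [hA]
    rw [h]
    fin_cases i <;>
      · simp [f, Xu, Yu, Zu, P, s, Matrix.mul_apply, Fin.sum_univ_three]
        refine ⟨⟨by linarith, by linarith, by linarith, by linarith, by linarith, by linarith,
          by linarith, by linarith, by linarith⟩, by linarith⟩

end CommutatorGradedAux

open CommutatorGradedAux in
theorem commutator_example_graded :
    IsGraded (Submonoid.closure
      {FreeGroup.of (0 : Fin 2), FreeGroup.of 1,
        (FreeGroup.of (0 : Fin 2))⁻¹ * (FreeGroup.of 1)⁻¹ *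
          FreeGroup.of 0 * FreeGroup.of 1}) := by
  set a := FreeGroup.of (0 : Fin 2) with ha
  set b := FreeGroup.of (1 : Fin 2) with hb
  set c := a⁻¹ * b⁻¹ * a * b with hc
  set S : Set (FreeGroup (Fin 2)) := {a, b, c} with hS
  set M := Submonoid.closure S with hM
  have hmema : a ∈ M := Submonoid.subset_closure (by simp [hS])
  have hmemb : b ∈ M := Submonoid.subset_closure (by simp [hS])
  have hmemc : c ∈ M := Submonoid.subset_closure (by simp [hS])
  set g : Fin 3 → M := ![⟨a, hmema⟩, ⟨b, hmemb⟩, ⟨c, hmemc⟩] with hg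
  set α : FreeMonoid (Fin 3) →* M := FreeMonoid.lift g with hα
  refine ⟨Fin 3, inferInstance, α, ?_, ?_⟩
  · -- surjectivity
    rintro ⟨m, hm⟩
    induction hm using Submonoid.closure_induction with
    | mem x hx =>
      simp only [hS, Set.mem_insert_iff, Set.mem_singleton_iff] at hx
      rcases hx with h | h | h
      · exact ⟨FreeMonoid.of 0, Subtype.ext (by subst h; simp [hα, hg])⟩
      · exact ⟨FreeMonoid.of 1, Subtype.ext (by subst h; simp [hα, hg])⟩
      · exact ⟨FreeMonoid.of 2, Subtype.ext (by subst h; simp [hα, hg])⟩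
    | one => exact ⟨1, Subtype.ext (by simp)⟩
    | mul x y hx hy ihx ihy =>
      obtain ⟨w1, hw1⟩ := ihx
      obtain ⟨w2, hw2⟩ := ihy
      exact ⟨w1 * w2, by rw [map_mul, hw1, hw2]; rfl⟩
  · -- finite preimages
    intro m
    have key : ∀ w : FreeMonoid (Fin 3), (ψ ((α w : M) : FreeGroup (Fin 2))).val
        = ((w.toList.map f).prod) := by
      have hcomp : ((Units.coeHom Mat).comp (ψ.comp (M.subtype.comp α)))
          = FreeMonoid.lift f := by
        apply FreeMonoid.hom_eq
        intro x
        fin_cases x <;>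
          simp only [MonoidHom.comp_apply, hα, FreeMonoid.lift_eval_of, hg, f,
            Matrix.cons_val_zero, Matrix.cons_val_one, Matrix.head_cons, Matrix.cons_val_two,
            Matrix.tail_cons, Submonoid.coe_subtype, Units.coeHom_apply, Fin.isValue]
        · rw [ψ]; simp [ha, FreeGroup.lift_apply_of]
        · rw [ψ]; simp [hb, FreeGroup.lift_apply_of]
        · show (ψ c).val = Zu.val
          rw [hc, ψ]
          simp only [map_mul, map_inv, ha, hb, FreeGroup.lift_apply_of, Matrix.cons_val_zero,
            Matrix.cons_val_one, Matrix.head_cons, Units.val_mul]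
          show (Xu⁻¹.val * Yu⁻¹.val * Xu.val * Yu.val) = Zu.val
          rw [show Xu⁻¹.val = Xu.inv from rfl, show Yu⁻¹.val = Yu.inv from rfl]
          decide
      intro w
      have := congrArg (fun h => h w) hcomp
      simpa [FreeMonoid.lift_apply] using this
    set N : ℕ := (s (ψ ((m : M) : FreeGroup (Fin 2))).val).toNat with hN
    apply Set.Finite.subset ((List.finite_length_le (Fin 3) N).image FreeMonoid.ofList)
    rintro w hw
    have hαw : α w = m := hw
    refine ⟨w.toList, ?_, rfl⟩
    have hg2 := growth w.toList
    have hle : (w.toList.length : ℤ) ≤ s (ψ ((m : M) : FreeGroup (Fin 2))).val := by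
      rw [← hαw, key w]
      exact hg2.2
    simp only [Set.mem_setOf_eq, hN]
    omega
end

section
/- Let G be the direct product of an infinite cyclic group generated by a and a cyclic group of order 2 generated by b (so G ≅ ℤ × ℤ/2ℤ, with b² = 1 and ab = ba), and let M be the submonoid of G generated by a and ab. Then M is graded, but M does not embed into any free group: for every set ι there is no injective monoid homomorphism from M into FreeGroup ι. -/
/-- The group `ℤ × ℤ/2ℤ`, written multiplicatively. -/
abbrev ZxZ2 : Type := Multiplicative (ℤ × ZMod 2)

/-- The generator `a = (1, 0)` of the infinite cyclic factor. -/
def genA : ZxZ2 := Multiplicative.ofAdd ((1 : ℤ), (0 : ZMod 2))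

/-- The generator `b = (0, 1)` of the factor of order 2. -/
def genB : ZxZ2 := Multiplicative.ofAdd ((0 : ℤ), (1 : ZMod 2))

universe u

/-- Free groups have no elements of order two. -/
lemma freeGroup_sq_eq_one {ι : Type u} {g : FreeGroup ι} (h : g * g = 1) : g = 1 := by
  classical
  have hinv : g = g⁻¹ := eq_inv_of_mul_eq_one_left h
  set w := g.toWord with hw
  have hred : FreeGroup.reduce w = w := g.reduce_toWord
  have hIR : w = FreeGroup.invRev w := by
    conv_lhs => rw [hw, hinv, FreeGroup.toWord_inv]
  have hlenIR : (FreeGroup.invRev w).length = w.length := FreeGroup.invRev_length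
  have key : ∀ i j (hi : i < w.length) (hj : j < w.length), i + j + 1 = w.length →
      w[i] = ((w[j]'hj).1, !(w[j]'hj).2) := by
    intro i j hi hj hij
    obtain rfl : j = w.length - 1 - i := by omega
    have h1 : w[i]'hi = (FreeGroup.invRev w)[i]'(by omega) := List.getElem_of_eq hIR hi
    rw [h1]
    simp [FreeGroup.invRev, List.getElem_reverse, List.getElem_map]
  -- w must be empty
  rcases Nat.eq_zero_or_pos w.length with h0 | hpos
  · have : w = [] := List.length_eq_zero_iff.mp h0
    have : g.toWord = (1 : FreeGroup ι).toWord := by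
      rw [← hw, this, FreeGroup.toWord_one]
    exact FreeGroup.toWord_injective this
  · exfalso
    rcases Nat.even_or_odd w.length with he | ho
    · -- even length: positions n/2 - 1 and n/2 form an adjacent inverse pair
      set n := w.length with hn
      have hj : n / 2 - 1 < n := by omega
      have hi2 : n / 2 < n := by rcases he with ⟨k, hk⟩; omega
      have hk := key (n / 2) (n / 2 - 1) hi2 hj (by rcases he with ⟨k, hk⟩; omega)
      have hsucc : n / 2 - 1 + 1 = n / 2 := by rcases he with ⟨k, hk⟩; omega
      have hdecomp : w = w.take (n / 2 - 1) ++
          ((w[n / 2 - 1]'hj).1, (w[n / 2 - 1]'hj).2) ::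
            ((w[n / 2 - 1]'hj).1, !(w[n / 2 - 1]'hj).2) :: w.drop (n / 2 + 1) := by
        conv_lhs => rw [← List.take_append_drop (n / 2 - 1) w,
          List.drop_eq_getElem_cons hj, hsucc, List.drop_eq_getElem_cons hi2, hk]
      exact FreeGroup.reduce.not (hred.trans hdecomp)
    · -- odd length: middle letter would be its own inverse
      have hm : w.length / 2 < w.length := by omega
      have hk := key (w.length / 2) (w.length / 2) hm hm (by rcases ho with ⟨k, hk⟩; omega)
      have := congrArg Prod.snd hk
      simp at this

theorem graded_not_embeddable_in_freeGroup :
    IsGraded (Submonoid.closure {genA, genA * genB}) ∧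
      ∀ (ι : Type u) (f : Submonoid.closure {genA, genA * genB} →* FreeGroup ι),
        ¬Function.Injective f := by
  have hmemA : genA ∈ Submonoid.closure {genA, genA * genB} :=
    Submonoid.subset_closure (by simp)
  have hmemAB : genA * genB ∈ Submonoid.closure {genA, genA * genB} :=
    Submonoid.subset_closure (by simp)
  constructor
  · -- M is graded
    classical
    let gen : Bool → Submonoid.closure {genA, genA * genB} :=
      fun b => if b then ⟨genA * genB, hmemAB⟩ else ⟨genA, hmemA⟩
    refine ⟨Bool, inferInstance, FreeMonoid.lift gen, ?_, ?_⟩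
    · rintro ⟨x, hx⟩
      refine Submonoid.closure_induction
        (motive := fun x hx => ∃ w, FreeMonoid.lift gen w = ⟨x, hx⟩) ?_ ⟨1, map_one _⟩ ?_ hx
      · intro x hxS
        simp only [Set.mem_insert_iff, Set.mem_singleton_iff] at hxS
        rcases hxS with rfl | rfl
        · exact ⟨FreeMonoid.of false, by simp [gen]⟩
        · exact ⟨FreeMonoid.of true, by simp [gen]⟩
      · rintro x y hx hy ⟨w1, h1⟩ ⟨w2, h2⟩
        exact ⟨w1 * w2, by rw [map_mul, h1, h2]; rfl⟩
    · intro m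
      have hcoord : ∀ w : FreeMonoid Bool,
          (Multiplicative.toAdd ((FreeMonoid.lift gen w :
            Submonoid.closure {genA, genA * genB}) : ZxZ2)).1 = (w.length : ℤ) := by
        intro w
        induction w using FreeMonoid.recOn with
        | one => simp
        | of_mul x xs ihx =>
          rw [map_mul, Submonoid.coe_mul, toAdd_mul, Prod.fst_add, ihx]
          cases x <;> rw [FreeMonoid.lift_eval_of] <;>
            simp [gen, genA, genB, FreeMonoid.length_mul, FreeMonoid.length_of]
      apply Set.Finite.subset (Set.Finite.preimage
        (Function.Injective.injOn FreeMonoid.toList.injective)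
        (List.finite_length_eq Bool ((Multiplicative.toAdd (m : ZxZ2)).1.toNat)))
      intro w hw
      simp only [Set.mem_preimage, Set.mem_singleton_iff] at hw
      have hc := hcoord w
      rw [hw] at hc
      simp only [Set.mem_preimage, Set.mem_setOf_eq]
      show (FreeMonoid.toList w).length = _
      have : (FreeMonoid.toList w).length = w.length := rfl
      omega
  · -- M does not embed in a free group
    intro ι f hf
    set xA : Submonoid.closure {genA, genA * genB} := ⟨genA, hmemA⟩ with hxA
    set xB : Submonoid.closure {genA, genA * genB} := ⟨genA * genB, hmemAB⟩ with hxB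
    have hne : xA ≠ xB := by
      intro heq
      have h2 := congrArg Subtype.val heq
      simp only [hxA, hxB] at h2
      exact (by decide : genA ≠ genA * genB) h2
    have hsq : xA * xA = xB * xB := by
      apply Subtype.ext
      show genA * genA = (genA * genB) * (genA * genB)
      decide
    have hc : Commute (f xA) (f xB) := by
      have h3 : xA * xB = xB * xA := mul_comm xA xB
      show f xA * f xB = f xB * f xA
      rw [← map_mul, h3, map_mul]
    have hg : (f xA * (f xB)⁻¹) * (f xA * (f xB)⁻¹) = 1 := by
      rw [Commute.mul_mul_mul_comm hc.symm.inv_left, ← map_mul, hsq, map_mul]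
      group
    have h1 : f xA * (f xB)⁻¹ = 1 := freeGroup_sq_eq_one hg
    have h2 : f xA = f xB := by rwa [mul_inv_eq_one] at h1
    exact hne (hf h2)
end
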